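/- Mod 2 Milnor K-theory of F vanishes in degrees at least 3: for every n ≥ 3 and every a₁, …, aₙ ∈ F^×, the product {a₁}·{a₂}⋯{aₙ} is zero in k^M(F). -/

import Mathlib

/-- A nondyadic `p`-adic field packaged as data: a field `F` of characteristic zero,
complete with respect to a surjective discrete valuation `v : Fˣ → ℤ`, with valuation
ring `O`, residue field `K` (finite of odd cardinality in applications), and residue
(quotient) map `res : O →+* K` whose kernel is the maximal ideal `𝔪 = {x : v x ≥ 1}`. -/
structure PadicData (F K : Type) [Field F] [Field K] where
  v : Fˣ → ℤ
  v_mul : ∀ x y : Fˣ, v (x * y) = v x + v y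
  v_surj : Function.Surjective v
  v_ultra : ∀ (x y : Fˣ) (h : (x : F) + (y : F) ≠ 0),
      min (v x) (v y) ≤ v (Units.mk0 ((x : F) + (y : F)) h)
  O : Subring F
  mem_O : ∀ x : F, x ∈ O ↔ ∀ h : x ≠ 0, 0 ≤ v (Units.mk0 x h)
  res : O →+* K
  res_surj : Function.Surjective res
  res_eq_zero : ∀ x : O, res x = 0 ↔ ∀ h : (x : F) ≠ 0, 1 ≤ v (Units.mk0 (x : F) h)
  complete : ∀ f : ℕ → F,
      (∀ N : ℤ, ∃ M : ℕ, ∀ m, M ≤ m → ∀ n, M ≤ n → ∀ h : f m - f n ≠ 0,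
        N ≤ v (Units.mk0 (f m - f n) h)) →
      ∃ a : F, ∀ N : ℤ, ∃ M : ℕ, ∀ n, M ≤ n → ∀ h : f n - a ≠ 0,
        N ≤ v (Units.mk0 (f n - a) h)
/-- The defining relations of mod 2 Milnor K-theory on the tensor algebra
`T(F^×)` (over `ℤ`, with `F^×` written additively): the Steinberg elements
`{a}·{1−a}` for `a ∈ F^× \ {1}` are set to `0`, and `2·1` is set to `0`.
Quotienting by `MilnorRel` realizes the quotient by the two-sided ideal `J`
generated by these elements. -/
inductive MilnorRel (F : Type) [Field F] :
    TensorAlgebra ℤ (Additive Fˣ) → TensorAlgebra ℤ (Additive Fˣ) → Prop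
  | steinberg (a : Fˣ) (h : (1 : F) - (a : F) ≠ 0) :
      MilnorRel F
        (TensorAlgebra.ι ℤ (Additive.ofMul a) *
          TensorAlgebra.ι ℤ (Additive.ofMul (Units.mk0 ((1 : F) - (a : F)) h))) 0
  | mod2 : MilnorRel F (2 : TensorAlgebra ℤ (Additive Fˣ)) 0

/-- Mod 2 Milnor K-theory `k^M(F) = T(F^×)/J`. -/
abbrev MilnorK (F : Type) [Field F] := RingQuot (MilnorRel F)

/-- The degree-one class `{a}` of `a ∈ F^×` in mod 2 Milnor K-theory. -/
noncomputable def kcls {F : Type} [Field F] (a : Fˣ) : MilnorK F :=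
  RingQuot.mkRingHom (MilnorRel F) (TensorAlgebra.ι ℤ (Additive.ofMul a))

variable {F : Type} [Field F]

theorem MK.two_eq_zero : (2 : MilnorK F) = 0 := by
  have := RingQuot.mkRingHom_rel (MilnorRel.mod2 (F := F))
  rw [map_ofNat, map_zero] at this
  exact_mod_cast this

theorem MK.add_self (x : MilnorK F) : x + x = 0 := by
  have : (2 : MilnorK F) * x = 0 := by rw [MK.two_eq_zero, zero_mul]
  rw [two_mul] at this; exact this

theorem MK.neg_eq (x : MilnorK F) : -x = x :=
  neg_eq_of_add_eq_zero_left (MK.add_self x)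

theorem kcls_mul (a b : Fˣ) : kcls (a * b) = kcls a + kcls b := by
  unfold kcls
  rw [← map_add]
  congr 1
  rw [← map_add]
  rfl

theorem kcls_one : kcls (1 : Fˣ) = 0 := by
  have := kcls_mul (1 : Fˣ) 1
  simpa using this.symm

theorem kcls_inv (a : Fˣ) : kcls a⁻¹ = kcls a := by
  have h := kcls_mul a a⁻¹
  rw [mul_inv_cancel, kcls_one] at h
  have h2 : kcls a⁻¹ = -kcls a := eq_neg_of_add_eq_zero_right h.symm
  rw [h2, MK.neg_eq]

theorem kcls_steinberg (a b : Fˣ) (hb : (b : F) = 1 - (a : F)) :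
    kcls a * kcls b = 0 := by
  have hne : (1 : F) - (a : F) ≠ 0 := by rw [← hb]; exact b.ne_zero
  have hbe : b = Units.mk0 ((1:F) - (a:F)) hne := by ext; simpa using hb
  rw [hbe]
  have := RingQuot.mkRingHom_rel (MilnorRel.steinberg a hne)
  simpa [kcls, map_mul] using this

theorem kcls_sq (a : Fˣ) : kcls (a * a) = 0 := by
  rw [kcls_mul]; exact MK.add_self _

theorem kcls_neg_self (a : Fˣ) : kcls a * kcls (-a) = 0 := by
  by_cases ha : a = 1
  · subst ha; rw [kcls_one, zero_mul]
  · have ha' : (a : F) ≠ 1 := fun h => ha (Units.ext h)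
    have h1 : ((1:F) - (a:F)) ≠ 0 := sub_ne_zero.mpr (fun h => ha' h.symm)
    have hainv : ((a⁻¹ : Fˣ) : F) ≠ 1 := by
      simp only [Units.val_inv_eq_inv_val]
      intro h
      exact ha' (by field_simp at h; simp [h])
    have h2 : ((1:F) - ((a⁻¹:Fˣ) : F)) ≠ 0 := sub_ne_zero.mpr (fun h => hainv h.symm)
    set b : Fˣ := Units.mk0 _ h1 with hbdef
    set c : Fˣ := Units.mk0 _ h2 with hcdef
    have key0 : (-a : Fˣ) * c = b := by
      ext
      rw [hbdef, hcdef]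
      simp only [Units.val_mul, Units.val_neg, Units.val_mk0, Units.val_inv_eq_inv_val]
      rw [mul_sub, neg_mul, neg_mul, mul_inv_cancel₀ (Units.ne_zero a)]
      ring
    have key : (-a : Fˣ) = b * c⁻¹ := eq_mul_inv_of_mul_eq key0
    have s1 : kcls a * kcls b = 0 := kcls_steinberg a b rfl
    have s2 : kcls a⁻¹ * kcls c = 0 := kcls_steinberg a⁻¹ c rfl
    rw [kcls_inv] at s2
    rw [key, kcls_mul, kcls_inv, mul_add, s1, zero_add]
    exact s2

theorem kcls_self (a : Fˣ) : kcls a * kcls a = kcls a * kcls (-1) := by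
  have h := kcls_neg_self a
  have e : (-a : Fˣ) = (-1) * a := by ext; simp
  rw [e, kcls_mul, mul_add, add_comm] at h
  have := add_eq_zero_iff_eq_neg.mp h
  rw [this, MK.neg_eq]

theorem kcls_comm (a b : Fˣ) : kcls a * kcls b = kcls b * kcls a := by
  have hb' : kcls b * kcls (-1) + kcls b * kcls b = 0 := by
    have hb := kcls_neg_self b
    rw [show (-b:Fˣ) = (-1)*b by ext; simp, kcls_mul, mul_add] at hb
    exact hb
  have h := kcls_neg_self (a*b)
  rw [show (-(a*b):Fˣ) = a * ((-1)*b) by ext; push_cast; ring,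
      kcls_mul, kcls_mul, kcls_mul] at h
  have expand : (kcls a + kcls b) * (kcls a + (kcls (-1) + kcls b)) =
      (kcls a * kcls a + kcls a * kcls (-1)) + (kcls a * kcls b + kcls b * kcls a)
      + (kcls b * kcls (-1) + kcls b * kcls b) := by noncomm_ring
  rw [expand, kcls_self a, MK.add_self, hb', zero_add, add_zero] at h
  have := eq_neg_of_add_eq_zero_left h
  rw [MK.neg_eq] at this
  exact this

theorem kcls_zpow (a : Fˣ) (n : ℤ) : kcls (a ^ n) = n • kcls a := by
  induction n using Int.induction_on with
  | zero => simpa using kcls_one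
  | succ k ih => rw [zpow_add, zpow_one, kcls_mul, ih, add_smul, one_smul]
  | pred k ih =>
      rw [sub_eq_add_neg, zpow_add, kcls_mul, ih, zpow_neg, zpow_one, kcls_inv, add_smul]
      congr 1
      rw [neg_smul, one_smul, MK.neg_eq]

theorem kcls_zpow_even (a : Fˣ) {n : ℤ} (hn : Even n) : kcls (a ^ n) = 0 := by
  obtain ⟨k, hk⟩ := hn
  rw [kcls_zpow, hk, add_smul]
  exact MK.add_self _

theorem kcls_zpow_odd (a : Fˣ) {n : ℤ} (hn : Odd n) : kcls (a ^ n) = kcls a := by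
  obtain ⟨k, hk⟩ := hn
  rw [kcls_zpow, hk, add_smul, one_smul, mul_smul, two_smul, MK.add_self, zero_add]



namespace PadicData

variable {F K : Type} [Field F] [Field K] (D : PadicData F K)

theorem v_one : D.v 1 = 0 := by
  have := D.v_mul 1 1
  simp at this
  omega

theorem v_inv (a : Fˣ) : D.v a⁻¹ = - D.v a := by
  have := D.v_mul a a⁻¹
  rw [mul_inv_cancel, v_one] at this
  omega

theorem v_neg_one : D.v (-1) = 0 := by
  have := D.v_mul (-1) (-1)
  rw [show ((-1 : Fˣ) * -1) = 1 by simp, v_one] at this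
  omega

theorem v_neg (a : Fˣ) : D.v (-a) = D.v a := by
  rw [show -a = -1 * a by simp, v_mul, v_neg_one, zero_add]

noncomputable def vv (x : F) : WithTop ℤ :=
  letI := Classical.dec (x = 0)
  if h : x = 0 then ⊤ else (D.v (Units.mk0 x h) : WithTop ℤ)

@[simp] theorem vv_zero : D.vv (0 : F) = ⊤ := by
  unfold vv
  simp

theorem vv_eq_top_iff {x : F} : D.vv x = ⊤ ↔ x = 0 := by
  unfold vv
  split
  · simp_all
  · simp_all

theorem vv_of_ne {x : F} (h : x ≠ 0) : D.vv x = (D.v (Units.mk0 x h) : WithTop ℤ) := by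
  unfold vv
  rw [dif_neg h]

@[simp] theorem vv_coe (a : Fˣ) : D.vv (a : F) = (D.v a : WithTop ℤ) := by
  rw [vv_of_ne D a.ne_zero]
  have : Units.mk0 (a : F) a.ne_zero = a := Units.ext rfl
  rw [this]

theorem vv_mul (x y : F) : D.vv (x * y) = D.vv x + D.vv y := by
  by_cases hx : x = 0
  · simp [hx]
  by_cases hy : y = 0
  · simp [hy]
  have hxy : x * y ≠ 0 := mul_ne_zero hx hy
  rw [vv_of_ne D hx, vv_of_ne D hy, vv_of_ne D hxy]
  rw [show Units.mk0 (x*y) hxy = Units.mk0 x hx * Units.mk0 y hy from Units.ext rfl, D.v_mul]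
  push_cast
  ring

theorem vv_neg (x : F) : D.vv (-x) = D.vv x := by
  by_cases hx : x = 0
  · simp [hx]
  have hnx : -x ≠ 0 := neg_ne_zero.mpr hx
  rw [vv_of_ne D hx, vv_of_ne D hnx,
    show Units.mk0 (-x) hnx = -(Units.mk0 x hx) from Units.ext rfl, v_neg]

theorem vv_one : D.vv (1 : F) = 0 := by
  rw [vv_of_ne D one_ne_zero, show Units.mk0 (1:F) one_ne_zero = 1 from Units.ext rfl, v_one]
  rfl

theorem vv_add (x y : F) : min (D.vv x) (D.vv y) ≤ D.vv (x + y) := by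
  by_cases hx : x = 0
  · simp [hx]
  by_cases hy : y = 0
  · simp [hy]
  by_cases hxy : x + y = 0
  · simp [hxy]
  rw [vv_of_ne D hx, vv_of_ne D hy, vv_of_ne D hxy]
  have := D.v_ultra (Units.mk0 x hx) (Units.mk0 y hy) (by simpa using hxy)
  rw [← WithTop.coe_min]
  exact_mod_cast this

theorem vv_sub (x y : F) : min (D.vv x) (D.vv y) ≤ D.vv (x - y) := by
  rw [sub_eq_add_neg, ← D.vv_neg y]
  exact D.vv_add x (-y)

theorem vv_add_eq_left {x y : F} (h : D.vv x < D.vv y) : D.vv (x + y) = D.vv x := by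
  have h2 : D.vv x ≤ D.vv (x + y) := by
    have := D.vv_add x y
    rwa [min_eq_left h.le] at this
  have h3 : min (D.vv (x + y)) (D.vv y) ≤ D.vv x := by
    have := D.vv_sub (x + y) y
    simpa using this
  refine le_antisymm ?_ h2
  rcases le_total (D.vv (x+y)) (D.vv y) with hc | hc
  · rwa [min_eq_left hc] at h3
  · rw [min_eq_right hc] at h3
    exact absurd h3 (not_le.mpr h)

theorem mem_O_iff (x : F) : x ∈ D.O ↔ 0 ≤ D.vv x := by
  rw [D.mem_O]
  by_cases hx : x = 0
  · simp [hx]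
  · rw [vv_of_ne D hx]
    constructor
    · intro h; exact_mod_cast h hx
    · intro h h'; exact_mod_cast h

theorem res_eq_zero_iff (x : D.O) : D.res x = 0 ↔ 1 ≤ D.vv (x : F) := by
  rw [D.res_eq_zero]
  by_cases hx : (x : F) = 0
  · simp [hx]
  · rw [vv_of_ne D hx]
    constructor
    · intro h; exact_mod_cast h hx
    · intro h h'; exact_mod_cast h

theorem vv_eq_zero_of_res_ne (x : D.O) (h : D.res x ≠ 0) : D.vv (x : F) = 0 := by
  have h0 : 0 ≤ D.vv (x : F) := (D.mem_O_iff _).mp x.2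
  have h1 : ¬ (1 ≤ D.vv (x : F)) := fun hh => h ((D.res_eq_zero_iff x).mpr hh)
  have hne : (x : F) ≠ 0 := by
    intro hx
    apply h1
    rw [hx]
    simp
  rw [vv_of_ne D hne] at h0 h1 ⊢
  have h1' : ¬ ((1:ℤ) ≤ D.v (Units.mk0 (x:F) hne)) := by exact_mod_cast h1
  have h0' : (0:ℤ) ≤ D.v (Units.mk0 (x:F) hne) := by exact_mod_cast h0
  norm_cast
  omega

/-- Newton iteration for square roots. -/
noncomputable def newton (w x0 : F) : ℕ → F
  | 0 => x0
  | n + 1 => (newton w x0 n + w / newton w x0 n) / 2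

theorem int_le_two_pow (N : ℤ) : N ≤ (2:ℤ) ^ N.toNat := by
  rcases le_or_gt N 0 with h | h
  · calc N ≤ 0 := h
      _ ≤ (2:ℤ)^N.toNat := by positivity
  · have h1 : (N.toNat : ℤ) = N := Int.toNat_of_nonneg h.le
    have := Nat.lt_two_pow_self (n := N.toNat)
    have : (N.toNat : ℤ) < (2:ℤ)^N.toNat := by exact_mod_cast this
    omega

section Newton

variable {D} {w : F}

theorem newton_invariant (h2 : D.vv (2 : F) = 0) (x0 : F) (hx0 : D.vv x0 = 0)
    (he0 : 1 ≤ D.vv (x0 ^ 2 - w)) (n : ℕ) :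
    D.vv (newton w x0 n) = 0 ∧ ((2^n : ℤ) : WithTop ℤ) ≤ D.vv (newton w x0 n ^ 2 - w) := by
  induction n with
  | zero => exact ⟨hx0, by simpa [newton] using he0⟩
  | succ n ih =>
    obtain ⟨hx, he⟩ := ih
    set x := newton w x0 n with hxdef
    have hxne : x ≠ 0 := by
      intro h
      rw [h] at hx
      simp at hx
    have h2ne : (2 : F) ≠ 0 := by
      intro h
      rw [h] at h2
      simp at h2
    have hstep : newton w x0 (n+1) = (x + w / x) / 2 := rfl
    set x' := (x + w / x) / 2 with hx'def
    -- error identity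
    have key : (x' ^ 2 - w) * (2 * x * (2 * x)) = (x ^ 2 - w) * (x ^ 2 - w) := by
      rw [hx'def]
      field_simp
      ring
    have hvkey := congrArg D.vv key
    rw [D.vv_mul, D.vv_mul, D.vv_mul, D.vv_mul, h2, hx] at hvkey
    simp only [add_zero, zero_add] at hvkey
    -- hvkey : vv (x'^2 - w) = vv (x^2-w) + vv (x^2-w)
    have hebound : ((2^(n+1) : ℤ) : WithTop ℤ) ≤ D.vv (x' ^ 2 - w) := by
      rw [hvkey]
      have : ((2^(n+1) : ℤ) : WithTop ℤ) = ((2^n : ℤ) : WithTop ℤ) + ((2^n : ℤ) : WithTop ℤ) := by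
        rw [← WithTop.coe_add]
        congr 1
        ring
      rw [this]
      exact add_le_add he he
    -- difference identity
    have keyd : (x' - x) * (2 * x) = -(x ^ 2 - w) := by
      rw [hx'def]
      field_simp
      ring
    have hvd := congrArg D.vv keyd
    rw [D.vv_mul, D.vv_mul, h2, hx, D.vv_neg] at hvd
    simp only [add_zero] at hvd
    have hddiff : (0 : WithTop ℤ) < D.vv (x' - x) := by
      rw [hvd]
      calc (0 : WithTop ℤ) < 1 := by exact_mod_cast zero_lt_one
        _ ≤ ((2^n : ℤ) : WithTop ℤ) := by
            have h' : (0:ℤ) < 2^n := pow_pos (by norm_num) n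
            have h'' : (1:ℤ) ≤ 2^n := by omega
            exact_mod_cast h''
        _ ≤ _ := he
    have hx' : D.vv x' = 0 := by
      have : x' = x + (x' - x) := by ring
      rw [this, D.vv_add_eq_left (by rw [hx]; exact hddiff)]
      exact hx
    exact ⟨by rw [hstep]; exact hx', by rw [hstep]; exact hebound⟩

theorem newton_cauchy (h2 : D.vv (2 : F) = 0) (x0 : F) (hx0 : D.vv x0 = 0)
    (he0 : 1 ≤ D.vv (x0 ^ 2 - w)) :
    ∀ m n : ℕ, n ≤ m → ((2^n : ℤ) : WithTop ℤ) ≤ D.vv (newton w x0 m - newton w x0 n) := by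
  intro m
  induction m with
  | zero =>
    intro n hn
    interval_cases n
    simp
  | succ m ih =>
    intro n hn
    rcases Nat.lt_or_ge n (m+1) with hlt | hge
    · have hn' : n ≤ m := Nat.lt_succ_iff.mp hlt
      have step : ((2^m : ℤ) : WithTop ℤ) ≤ D.vv (newton w x0 (m+1) - newton w x0 m) := by
        obtain ⟨hx, he⟩ := newton_invariant h2 x0 hx0 he0 m
        set x := newton w x0 m with hxdef
        have hxne : x ≠ 0 := by intro h; rw [h] at hx; simp at hx
        have h2ne : (2 : F) ≠ 0 := by intro h; rw [h] at h2; simp at h2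
        have hstep : newton w x0 (m+1) = (x + w / x) / 2 := rfl
        have keyd : (newton w x0 (m+1) - x) * (2 * x) = -(x ^ 2 - w) := by
          rw [hstep]
          field_simp
          ring
        have hvd := congrArg D.vv keyd
        rw [D.vv_mul, D.vv_mul, h2, hx, D.vv_neg] at hvd
        simp only [add_zero] at hvd
        rw [hvd]
        exact he
      have tele : newton w x0 (m+1) - newton w x0 n
          = (newton w x0 (m+1) - newton w x0 m) + (newton w x0 m - newton w x0 n) := by ring
      rw [tele]
      calc ((2^n : ℤ) : WithTop ℤ)
          ≤ min ((2^m : ℤ) : WithTop ℤ) ((2^n : ℤ) : WithTop ℤ) := by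
            refine le_min ?_ le_rfl
            exact_mod_cast pow_le_pow_right₀ one_le_two hn'
        _ ≤ min (D.vv (newton w x0 (m+1) - newton w x0 m)) (D.vv (newton w x0 m - newton w x0 n)) := by
            exact min_le_min step (ih n hn')
        _ ≤ _ := D.vv_add _ _
    · have : n = m + 1 := le_antisymm hn hge
      subst this
      simp

theorem newton_limit (h2 : D.vv (2 : F) = 0) (x0 : F) (hx0 : D.vv x0 = 0)
    (he0 : 1 ≤ D.vv (x0 ^ 2 - w)) :
    ∃ a : F, a ≠ 0 ∧ a ^ 2 = w := by
  set f := newton w x0 with hfdef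
  have hcauchy : ∀ N : ℤ, ∃ M : ℕ, ∀ m, M ≤ m → ∀ n, M ≤ n → ∀ h : f m - f n ≠ 0,
      N ≤ D.v (Units.mk0 (f m - f n) h) := by
    intro N
    refine ⟨N.toNat, fun m hm n hn h => ?_⟩
    have key : (N : WithTop ℤ) ≤ D.vv (f m - f n) := by
      have base : ((2^(min m n) : ℤ) : WithTop ℤ) ≤ D.vv (f m - f n) := by
        rcases le_total n m with hle | hle
        · rw [min_eq_right hle]
          exact newton_cauchy h2 x0 hx0 he0 m n hle
        · rw [min_eq_left hle, ← D.vv_neg, neg_sub]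
          exact newton_cauchy h2 x0 hx0 he0 n m hle
      refine le_trans ?_ base
      have h1 : N ≤ (2:ℤ) ^ N.toNat := int_le_two_pow N
      have h2' : (2:ℤ) ^ N.toNat ≤ (2:ℤ) ^ (min m n) :=
        pow_le_pow_right₀ one_le_two (le_min hm hn)
      exact_mod_cast le_trans h1 h2'
    rw [D.vv_of_ne h] at key
    exact_mod_cast key
  obtain ⟨a, ha⟩ := D.complete f hcauchy
  have hlim : ∀ N : ℤ, ∃ M : ℕ, ∀ n, M ≤ n → (N : WithTop ℤ) ≤ D.vv (f n - a) := by
    intro N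
    obtain ⟨M, hM⟩ := ha N
    refine ⟨M, fun n hn => ?_⟩
    by_cases h : f n - a = 0
    · rw [h]; simp
    · rw [D.vv_of_ne h]
      exact_mod_cast hM n hn h
  -- vv a = 0
  have hva : D.vv a = 0 := by
    obtain ⟨M, hM⟩ := hlim 1
    have hx := (newton_invariant h2 x0 hx0 he0 M).1
    have : a = f M + (a - f M) := by ring
    rw [this, D.vv_add_eq_left]
    · exact hx
    · rw [hx, ← neg_sub, D.vv_neg]
      calc (0 : WithTop ℤ) < 1 := by exact_mod_cast zero_lt_one
        _ ≤ D.vv (f M - a) := hM M le_rfl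
  have hane : a ≠ 0 := by intro h; rw [h] at hva; simp at hva
  refine ⟨a, hane, ?_⟩
  by_contra hne
  have hne' : a ^ 2 - w ≠ 0 := sub_ne_zero.mpr hne
  obtain ⟨c, hc⟩ : ∃ c : ℤ, D.vv (a ^ 2 - w) = (c : WithTop ℤ) := by
    have := D.vv_of_ne hne'
    exact ⟨_, this⟩
  -- get big n
  obtain ⟨M1, hM1⟩ := hlim (c + 1)
  obtain ⟨M2, hM2⟩ : ∃ M2 : ℕ, (c + 1 : ℤ) ≤ (2:ℤ)^M2 :=
    ⟨(c+1).toNat, int_le_two_pow (c+1)⟩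
  set n := max M1 M2 with hndef
  obtain ⟨hxn, hen⟩ := newton_invariant h2 x0 hx0 he0 n
  have h1 : ((c+1 : ℤ) : WithTop ℤ) ≤ D.vv (f n - a) := hM1 n (le_max_left _ _)
  have h2'' : ((c+1 : ℤ) : WithTop ℤ) ≤ D.vv (f n ^ 2 - w) := by
    refine le_trans ?_ hen
    have : (2:ℤ)^M2 ≤ (2:ℤ)^n := pow_le_pow_right₀ one_le_two (le_max_right _ _)
    exact_mod_cast le_trans hM2 this
  have hsum : D.vv (f n + a) ≥ 0 := by
    have := D.vv_add (f n) a
    rw [hxn, hva] at this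
    simpa using this
  have hprod : ((c+1 : ℤ) : WithTop ℤ) ≤ D.vv ((f n - a) * (f n + a)) := by
    rw [D.vv_mul]
    calc ((c+1 : ℤ) : WithTop ℤ) = (c+1 : ℤ) + 0 := by rw [add_zero]
      _ ≤ D.vv (f n - a) + D.vv (f n + a) := add_le_add h1 hsum
  have hid : a ^ 2 - w = (f n ^ 2 - w) - (f n - a) * (f n + a) := by ring
  have hfinal : ((c+1 : ℤ) : WithTop ℤ) ≤ D.vv (a ^ 2 - w) := by
    rw [hid]
    refine le_trans (le_min h2'' hprod) (D.vv_sub _ _)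
  rw [hc] at hfinal
  have : (c + 1 : ℤ) ≤ c := by exact_mod_cast hfinal
  omega

end Newton

section Hensel

variable [CharZero F] [Fintype K]

theorem two_ne_zero_K (hodd : Odd (Fintype.card K)) : (2 : K) ≠ 0 := by
  intro h
  have h2 : (ringChar K) ∣ 2 := (CharP.cast_eq_zero_iff K (ringChar K) 2).mp (by exact_mod_cast h)
  have hprime : (ringChar K).Prime := CharP.char_is_prime K (ringChar K)
  have hchar : ringChar K = 2 := (Nat.prime_dvd_prime_iff_eq hprime Nat.prime_two).mp h2
  have := FiniteField.even_card_iff_char_two.mp hchar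
  rcases hodd with ⟨k, hk⟩
  omega

theorem vv_two (hodd : Odd (Fintype.card K)) : D.vv (2 : F) = 0 := by
  have h := D.vv_eq_zero_of_res_ne (2 : D.O) (by
    rw [map_ofNat]
    exact_mod_cast two_ne_zero_K (K := K) hodd)
  rw [show ((2 : D.O) : F) = (2 : F) from map_ofNat D.O.subtype 2] at h
  exact h

theorem hensel (hodd : Odd (Fintype.card K)) (w : D.O) (h0 : D.res w ≠ 0)
    (hs : IsSquare (D.res w)) : ∃ s : F, s ≠ 0 ∧ s ^ 2 = (w : F) := by
  obtain ⟨r, hr⟩ := hs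
  have hrne : r ≠ 0 := by
    intro h
    rw [h, mul_zero] at hr
    exact h0 hr
  obtain ⟨x0, hx0⟩ := D.res_surj r
  have hx0ne : D.res x0 ≠ 0 := by rw [hx0]; exact hrne
  have hvx0 : D.vv (x0 : F) = 0 := D.vv_eq_zero_of_res_ne x0 hx0ne
  have he0 : 1 ≤ D.vv ((x0 : F) ^ 2 - (w : F)) := by
    have hres : D.res (x0 * x0 - w) = 0 := by
      rw [map_sub, map_mul, hx0, hr, sub_self]
    have := (D.res_eq_zero_iff _).mp hres
    have hcast : ((x0 * x0 - w : D.O) : F) = (x0 : F) ^ 2 - (w : F) := by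
      push_cast
      ring
    rwa [hcast] at this
  exact newton_limit (D.vv_two hodd) (x0 : F) hvx0 he0

def unitO (u : Fˣ) (hu : D.v u = 0) : D.O :=
  ⟨(u : F), by
    rw [D.mem_O_iff, D.vv_coe, hu]
    exact_mod_cast le_refl (0 : ℤ)⟩

theorem res_unitO_ne (u : Fˣ) (hu : D.v u = 0) : D.res (D.unitO u hu) ≠ 0 := by
  intro h
  have := (D.res_eq_zero_iff _).mp h
  have hval : ((D.unitO u hu : D.O) : F) = (u : F) := rfl
  rw [hval, D.vv_coe, hu] at this
  exact absurd this (by exact_mod_cast (by norm_num : ¬ ((1:ℤ) ≤ 0)))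

theorem kcls_unit_of_sq (hodd : Odd (Fintype.card K)) (u : Fˣ) (hu : D.v u = 0)
    (hs : IsSquare (D.res (D.unitO u hu))) : kcls u = 0 := by
  obtain ⟨s, hsne, hs2⟩ := D.hensel hodd (D.unitO u hu) (D.res_unitO_ne u hu) hs
  have : u = Units.mk0 s hsne * Units.mk0 s hsne := by
    ext
    have : ((D.unitO u hu : D.O) : F) = (u : F) := rfl
    rw [← this, ← hs2]
    simp [sq]
  rw [this, kcls_sq]

theorem exists_u0 (hodd : Odd (Fintype.card K)) :
    ∃ u0 : Fˣ, D.v u0 = 0 ∧ ∀ u : Fˣ, D.v u = 0 → kcls u = 0 ∨ kcls u = kcls u0 := by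
  classical
  by_cases hall : ∀ k : K, IsSquare k
  · exact ⟨1, D.v_one, fun u hu => Or.inl (D.kcls_unit_of_sq hodd u hu (hall _))⟩
  · push_neg at hall
    obtain ⟨c, hc⟩ := hall
    have hcne : c ≠ 0 := by rintro rfl; exact hc ⟨0, by simp⟩
    obtain ⟨c0, hc0⟩ := D.res_surj c
    have hc0ne : D.res c0 ≠ 0 := by rw [hc0]; exact hcne
    have hvc0 : D.vv (c0 : F) = 0 := D.vv_eq_zero_of_res_ne c0 hc0ne
    have hc0Fne : (c0 : F) ≠ 0 := by
      intro h
      rw [h] at hvc0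
      simp at hvc0
    set u0 : Fˣ := Units.mk0 (c0 : F) hc0Fne with hu0def
    have hvu0 : D.v u0 = 0 := by
      have := D.vv_of_ne hc0Fne
      rw [hvc0] at this
      exact_mod_cast this.symm
    have hunitO_u0 : D.unitO u0 hvu0 = c0 := Subtype.ext rfl
    refine ⟨u0, hvu0, fun u hu => ?_⟩
    by_cases hsq : IsSquare (D.res (D.unitO u hu))
    · exact Or.inl (D.kcls_unit_of_sq hodd u hu hsq)
    · right
      have hrne : D.res (D.unitO u hu) ≠ 0 := D.res_unitO_ne u hu
      have hchar2 : ringChar K ≠ 2 := by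
        intro h
        have := FiniteField.even_card_iff_char_two.mp h
        rcases hodd with ⟨k, hk⟩
        omega
      have hmulsq : IsSquare (D.res (D.unitO u hu) * c) := by
        have h1 : quadraticChar K (D.res (D.unitO u hu)) = -1 :=
          quadraticChar_neg_one_iff_not_isSquare.mpr hsq
        have h2 : quadraticChar K c = -1 :=
          quadraticChar_neg_one_iff_not_isSquare.mpr hc
        have h3 : quadraticChar K (D.res (D.unitO u hu) * c) = 1 := by
          rw [map_mul, h1, h2]
          norm_num
        exact (quadraticChar_one_iff_isSquare (mul_ne_zero hrne hcne)).mp h3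
      have hvuu0 : D.v (u * u0) = 0 := by rw [D.v_mul, hu, hvu0]; norm_num
      have hunit_mul : D.unitO (u * u0) hvuu0 = D.unitO u hu * c0 := by
        apply Subtype.ext
        rw [← hunitO_u0]
        rfl
      have : kcls (u * u0) = 0 := by
        apply D.kcls_unit_of_sq hodd (u * u0) hvuu0
        rw [hunit_mul, map_mul, hc0]
        exact hmulsq
      rw [kcls_mul] at this
      have h4 := eq_neg_of_add_eq_zero_left this
      rw [MK.neg_eq] at h4
      exact h4

include D in
theorem kcls_neg_one_self (hodd : Odd (Fintype.card K)) :
    kcls (-1 : Fˣ) * kcls (-1 : Fˣ) = 0 := by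
  classical
  have hm1 : D.unitO (-1) D.v_neg_one = -1 := by
    apply Subtype.ext
    rfl
  have hresm1 : D.res (D.unitO (-1) D.v_neg_one) = -1 := by rw [hm1, map_neg, map_one]
  by_cases hsq : IsSquare (-1 : K)
  · have : kcls (-1 : Fˣ) = 0 := by
      apply D.kcls_unit_of_sq hodd (-1) D.v_neg_one
      rw [hresm1]
      exact hsq
    rw [this, zero_mul]
  · -- -1 is a sum of two squares in K
    haveI : NeZero (ringChar K) := ⟨(CharP.char_is_prime K (ringChar K)).ne_zero⟩
    obtain ⟨a, b, hab⟩ := CharP.sq_add_sq K (ringChar K) (-1 : ℤ)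
    rw [Int.cast_neg, Int.cast_one] at hab
    have hane : (a : K) ≠ 0 := by
      intro h
      rw [h] at hab
      simp at hab
      exact hsq ⟨(b:K), by rw [← hab]; ring⟩
    have hbne : (b : K) ≠ 0 := by
      intro h
      rw [h] at hab
      simp at hab
      exact hsq ⟨(a:K), by rw [← hab]; ring⟩
    obtain ⟨y0, hy0⟩ := D.res_surj (b : K)
    have hy0ne : D.res y0 ≠ 0 := by rw [hy0]; exact hbne
    have hvy0 : D.vv (y0 : F) = 0 := D.vv_eq_zero_of_res_ne y0 hy0ne
    have hy0Fne : (y0 : F) ≠ 0 := by intro h; rw [h] at hvy0; simp at hvy0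
    set w : D.O := -1 - y0 * y0 with hwdef
    have hresw : D.res w = (a : K) * (a : K) := by
      rw [hwdef, map_sub, map_neg, map_one, map_mul, hy0]
      linear_combination -hab
    have hreswne : D.res w ≠ 0 := by rw [hresw]; exact mul_ne_zero hane hane
    obtain ⟨X, hXne, hX2⟩ := D.hensel hodd w hreswne ⟨(a : K), hresw⟩
    have hwF : (w : F) = -1 - (y0 : F)^2 := by
      rw [hwdef]
      push_cast
      ring
    -- α = 1 + y0² = -X², Steinberg with 1 - α = -y0²
    have hXsq : X^2 = -1 - (y0 : F)^2 := by rw [hX2, hwF]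
    have hαne : (1 : F) + (y0 : F)^2 ≠ 0 := by
      intro h
      apply hXne
      have : X^2 = 0 := by rw [hXsq]; linear_combination -h
      exact pow_eq_zero_iff (by norm_num) |>.mp this
    have hβne : -((y0 : F)^2) ≠ 0 := by
      simpa using pow_ne_zero 2 hy0Fne
    set A : Fˣ := Units.mk0 _ hαne with hAdef
    set B : Fˣ := Units.mk0 _ hβne with hBdef
    have hst : kcls A * kcls B = 0 := by
      apply kcls_steinberg
      show -((y0 : F)^2) = 1 - (1 + (y0 : F)^2)
      ring
    have hA : kcls A = kcls (-1 : Fˣ) := by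
      have : A = (-1 : Fˣ) * (Units.mk0 X hXne * Units.mk0 X hXne) := by
        ext
        rw [hAdef]
        simp only [Units.val_mul, Units.val_neg, Units.val_one, Units.val_mk0]
        linear_combination hXsq
      rw [this, kcls_mul, kcls_sq, add_zero]
    have hB : kcls B = kcls (-1 : Fˣ) := by
      have : B = (-1 : Fˣ) * (Units.mk0 (y0:F) hy0Fne * Units.mk0 (y0:F) hy0Fne) := by
        ext
        rw [hBdef]
        simp only [Units.val_mul, Units.val_neg, Units.val_one, Units.val_mk0]
        ring
      rw [this, kcls_mul, kcls_sq, add_zero]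
    rw [hA, hB] at hst
    exact hst

theorem kcls_unit_unit (hodd : Odd (Fintype.card K)) (u v' : Fˣ)
    (hu : D.v u = 0) (hv : D.v v' = 0) : kcls u * kcls v' = 0 := by
  obtain ⟨u0, hu0, hclass⟩ := D.exists_u0 hodd
  rcases hclass u hu with h1 | h1
  · rw [h1, zero_mul]
  rcases hclass v' hv with h2 | h2
  · rw [h2, mul_zero]
  rw [h1, h2, kcls_self]
  rcases hclass (-1) D.v_neg_one with h3 | h3
  · rw [h3, mul_zero]
  · rw [← h3]
    exact D.kcls_neg_one_self hodd

end Hensel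

end PadicData

namespace PadicData

variable {F K : Type} [Field F] [Field K] (D : PadicData F K)

theorem v_zpow (a : Fˣ) (n : ℤ) : D.v (a ^ n) = n * D.v a := by
  induction n using Int.induction_on with
  | zero => simpa using D.v_one
  | succ k ih => rw [zpow_add, zpow_one, D.v_mul, ih]; ring
  | pred k ih =>
      rw [sub_eq_add_neg, zpow_add, D.v_mul, ih, zpow_neg, zpow_one, D.v_inv]
      ring

end PadicData

theorem milnor_vanish_high_degree' {F K : Type} [Field F] [CharZero F] [Field K] [Fintype K]
    (D : PadicData F K) (hodd : Odd (Fintype.card K)) :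
    ∀ (n : ℕ), 3 ≤ n → ∀ a : Fin n → Fˣ,
      (List.ofFn (fun i => kcls (a i))).prod = 0 := by
  obtain ⟨π, hπ⟩ := D.v_surj 1
  set Q : MilnorK F → Prop :=
    fun t => t = kcls π ∨ ∃ u : Fˣ, D.v u = 0 ∧ t = kcls u with hQdef
  have hUU : ∀ u v' : Fˣ, D.v u = 0 → D.v v' = 0 → kcls u * kcls v' = 0 :=
    fun u v' hu hv => D.kcls_unit_unit hodd u v' hu hv
  have hQtriple : ∀ x y z : MilnorK F, Q x → Q y → Q z → x * y * z = 0 := by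
    intro x y z hx hy hz
    rcases hx with rfl | ⟨u, hu, rfl⟩ <;> rcases hy with rfl | ⟨v, hv, rfl⟩ <;>
      rcases hz with rfl | ⟨t, ht, rfl⟩
    · -- πππ
      rw [kcls_self π, mul_assoc, kcls_comm (-1) π, ← mul_assoc, kcls_self π, mul_assoc,
        hUU (-1) (-1) D.v_neg_one D.v_neg_one, mul_zero]
    · -- ππt
      rw [kcls_self π, mul_assoc, hUU (-1) t D.v_neg_one ht, mul_zero]
    · -- πvπ
      rw [kcls_comm π v, mul_assoc, kcls_self π, ← mul_assoc, kcls_comm v π, mul_assoc,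
        hUU v (-1) hv D.v_neg_one, mul_zero]
    · -- πvt
      rw [mul_assoc, hUU v t hv ht, mul_zero]
    · -- uππ
      rw [mul_assoc, kcls_self π, ← mul_assoc, kcls_comm u π, mul_assoc,
        hUU u (-1) hu D.v_neg_one, mul_zero]
    · -- uπt
      rw [kcls_comm u π, mul_assoc, hUU u t hu ht, mul_zero]
    · -- uvπ
      rw [hUU u v hu hv, zero_mul]
    · -- uvt
      rw [hUU u v hu hv, zero_mul]
  have hdecomp : ∀ a : Fˣ, ∃ x y : MilnorK F, Q x ∧ Q y ∧ kcls a = x + y := by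
    intro a
    set n := D.v a with hndef
    have hu : D.v (π ^ (-n) * a) = 0 := by
      rw [D.v_mul, D.v_zpow, hπ, ← hndef]
      ring
    have ha : a = π ^ n * (π ^ (-n) * a) := by
      rw [← mul_assoc, ← zpow_add, add_neg_cancel, zpow_zero, one_mul]
    have hk : kcls a = kcls (π ^ n) + kcls (π ^ (-n) * a) := by
      have := kcls_mul (π ^ n) (π ^ (-n) * a)
      rw [← ha] at this
      exact this
    rcases Int.even_or_odd n with he | ho
    · refine ⟨kcls (π ^ (-n) * a), kcls 1, Or.inr ⟨_, hu, rfl⟩, Or.inr ⟨1, D.v_one, rfl⟩, ?_⟩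
      rw [hk, kcls_zpow_even π he, zero_add, kcls_one, add_zero]
    · refine ⟨kcls π, kcls (π ^ (-n) * a), Or.inl rfl, Or.inr ⟨_, hu, rfl⟩, ?_⟩
      rw [hk, kcls_zpow_odd π ho]
  have htri : ∀ a b c : Fˣ, kcls a * kcls b * kcls c = 0 := by
    intro a b c
    obtain ⟨x1, y1, q1, q1', h1⟩ := hdecomp a
    obtain ⟨x2, y2, q2, q2', h2⟩ := hdecomp b
    obtain ⟨x3, y3, q3, q3', h3⟩ := hdecomp c
    have expand : (x1 + y1) * (x2 + y2) * (x3 + y3) =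
        x1*x2*x3 + x1*x2*y3 + x1*y2*x3 + x1*y2*y3 +
        (y1*x2*x3 + y1*x2*y3 + y1*y2*x3 + y1*y2*y3) := by noncomm_ring
    rw [h1, h2, h3, expand,
      hQtriple _ _ _ q1 q2 q3, hQtriple _ _ _ q1 q2 q3',
      hQtriple _ _ _ q1 q2' q3, hQtriple _ _ _ q1 q2' q3',
      hQtriple _ _ _ q1' q2 q3, hQtriple _ _ _ q1' q2 q3',
      hQtriple _ _ _ q1' q2' q3, hQtriple _ _ _ q1' q2' q3']
    simp
  intro n hn
  induction n, hn using Nat.le_induction with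
  | base =>
    intro a
    simp only [List.ofFn_succ, List.prod_cons, List.ofFn_zero, List.prod_nil, mul_one]
    rw [← mul_assoc]
    exact htri _ _ _
  | succ m hm ih =>
    intro a
    rw [List.ofFn_succ, List.prod_cons, ih (fun i => a i.succ), mul_zero]

/-- mod 2 Milnor K-theory of `F` vanishes in degrees `≥ 3`. -/
theorem milnor_vanish_high_degree {F K : Type} [Field F] [CharZero F] [Field K] [Fintype K]
    (D : PadicData F K) (hodd : Odd (Fintype.card K)) :
    ∀ (n : ℕ), 3 ≤ n → ∀ a : Fin n → Fˣ,
      (List.ofFn (fun i => kcls (a i))).prod = 0 :=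
  milnor_vanish_high_degree' D hodd
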